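/- For every real λ, the linear map v ↦ (x ↦ Y(x;λ)·v) restricts to a linear isomorphism from the null space Null(W(λ)) of W(λ) onto the vector space of all twice continuously differentiable φ : [0,π] → ℝ^N satisfying -φ'' + P·φ = λ·φ, B·φ'(0) + A·φ(0) = 0 and ℬ·φ'(π) + 𝒜·φ(π) = 0. In particular, the multiplicity of λ as an eigenvalue of (P,A,B,𝒜,ℬ) equals dim Null(W(λ)). -/

import Mathlib

open Matrix MeasureTheory Set Filter

attribute [local instance] Matrix.normedAddCommGroup Matrix.normedSpace

/-- `φ` is a (C²) solution of the boundary value problem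
`-φ'' + P·φ = l·φ`, `B·φ'(0) + A·φ(0) = 0`, `ℬ·φ'(π) + 𝒜·φ(π) = 0`. -/
def SLSol (N : ℕ) (P : ℝ → Matrix (Fin N) (Fin N) ℝ)
    (A B 𝒜 ℬ : Matrix (Fin N) (Fin N) ℝ) (l : ℝ) (φ : ℝ → Fin N → ℝ) : Prop :=
  ContDiff ℝ 2 φ ∧
    (∀ x ∈ Set.Icc (0:ℝ) Real.pi, -(deriv (deriv φ) x) + P x *ᵥ φ x = l • φ x) ∧
    B *ᵥ deriv φ 0 + A *ᵥ φ 0 = 0 ∧ ℬ *ᵥ deriv φ Real.pi + 𝒜 *ᵥ φ Real.pi = 0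

/-- The space of solutions of the boundary value problem, viewed as functions on `[0,π]`,
has dimension `m`; i.e. `l` is an eigenvalue of multiplicity `m` (an eigenvalue when `m ≥ 1`). -/
def HasMultiplicity (N : ℕ) (P : ℝ → Matrix (Fin N) (Fin N) ℝ)
    (A B 𝒜 ℬ : Matrix (Fin N) (Fin N) ℝ) (l : ℝ) (m : ℕ) : Prop :=
  ∃ b : Fin m → ℝ → Fin N → ℝ,
    (∀ i, SLSol N P A B 𝒜 ℬ l (b i)) ∧
    (∀ d : Fin m → ℝ, (∀ x ∈ Set.Icc (0:ℝ) Real.pi, ∑ i, d i • b i x = 0) → d = 0) ∧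
    (∀ φ, SLSol N P A B 𝒜 ℬ l φ → ∃ d : Fin m → ℝ,
      ∀ x ∈ Set.Icc (0:ℝ) Real.pi, φ x = ∑ i, d i • b i x)

/-! ### Auxiliary lemmas -/

section Aux

variable {N : ℕ}

/-- Applying a matrix-valued function to a fixed vector, as a continuous linear map. -/
noncomputable def mvCLM (v : Fin N → ℝ) : Matrix (Fin N) (Fin N) ℝ →L[ℝ] (Fin N → ℝ) :=
  LinearMap.toContinuousLinearMap
    { toFun := fun M => M *ᵥ v
      map_add' := fun M M' => Matrix.add_mulVec M M' v
      map_smul' := fun c M => Matrix.smul_mulVec c M v }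

lemma mvCLM_apply (v : Fin N → ℝ) (M : Matrix (Fin N) (Fin N) ℝ) : mvCLM v M = M *ᵥ v := rfl

lemma hasDerivAt_mulVec {f : ℝ → Matrix (Fin N) (Fin N) ℝ} {M : Matrix (Fin N) (Fin N) ℝ}
    {x : ℝ} (hf : HasDerivAt f M x) (v : Fin N → ℝ) :
    HasDerivAt (fun x => f x *ᵥ v) (M *ᵥ v) x := by
  exact ((mvCLM v).hasFDerivAt.comp_hasDerivAt x hf)

lemma contDiff_mulVec {f : ℝ → Matrix (Fin N) (Fin N) ℝ} (hf : ContDiff ℝ 2 f)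
    (v : Fin N → ℝ) : ContDiff ℝ 2 (fun x => f x *ᵥ v) :=
  ((mvCLM v).contDiff).comp hf

lemma deriv_mulVec {f : ℝ → Matrix (Fin N) (Fin N) ℝ} (hf : Differentiable ℝ f)
    (v : Fin N → ℝ) : deriv (fun x => f x *ᵥ v) = fun x => deriv f x *ᵥ v := by
  funext x
  exact (hasDerivAt_mulVec (hf x).hasDerivAt v).deriv

variable {E : Type*} [NormedAddCommGroup E] [NormedSpace ℝ E]

lemma cd2_deriv_diff {f : ℝ → E} (hf : ContDiff ℝ 2 f) : Differentiable ℝ (deriv f) := by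
  have h2 : ContDiff ℝ ((1:ℕ) + 1) f := by norm_num at hf ⊢; exact hf
  exact ((contDiff_succ_iff_deriv.mp h2).2.2).differentiable (by norm_num)

lemma deriv_eqOn_Icc {f g : ℝ → E} (hf : ContDiff ℝ 2 f) (hg : ContDiff ℝ 2 g)
    (h : Set.EqOn f g (Set.Icc 0 Real.pi)) :
    Set.EqOn (deriv f) (deriv g) (Set.Icc 0 Real.pi) := by
  have hIoo : Set.EqOn (deriv f) (deriv g) (Set.Ioo 0 Real.pi) := by
    intro x hx
    have hnhds : Set.Ioo (0:ℝ) Real.pi ∈ nhds x := isOpen_Ioo.mem_nhds hx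
    have hev : f =ᶠ[nhds x] g :=
      Filter.eventuallyEq_of_mem hnhds fun y hy => h (Set.Ioo_subset_Icc_self hy)
    exact hev.deriv_eq
  have hcl : closure (Set.Ioo (0:ℝ) Real.pi) = Set.Icc 0 Real.pi :=
    closure_Ioo (ne_of_lt Real.pi_pos)
  have := hIoo.closure (hf.continuous_deriv (by norm_num))
    (hg.continuous_deriv (by norm_num))
  rwa [hcl] at this

lemma inj_of_rank {A B : Matrix (Fin N) (Fin N) ℝ}
    (hrk : (Matrix.fromCols A B).rank = N) :
    ∀ u : Fin N → ℝ, Aᵀ *ᵥ u = 0 → Bᵀ *ᵥ u = 0 → u = 0 := by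
  intro u hA hB
  have hrkT : (Matrix.fromRows Aᵀ Bᵀ).rank = N := by
    rw [← Matrix.transpose_fromCols, Matrix.rank_transpose]; exact hrk
  set M := Matrix.fromRows Aᵀ Bᵀ with hM
  have hker : LinearMap.ker M.mulVecLin = ⊥ := by
    have h1 := LinearMap.finrank_range_add_finrank_ker M.mulVecLin
    rw [Module.finrank_fintype_fun_eq_card] at h1
    have hr : Module.finrank ℝ (LinearMap.range M.mulVecLin) = N := hrkT
    rw [hr] at h1
    simp at h1
    exact h1
  have hmem : u ∈ LinearMap.ker M.mulVecLin := by
    rw [LinearMap.mem_ker, Matrix.mulVecLin_apply, hM, Matrix.fromRows_mulVec, hA, hB]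
    ext (i|i) <;> rfl
  rw [hker] at hmem
  simpa using hmem

lemma exists_param {A B : Matrix (Fin N) (Fin N) ℝ}
    (hAB : B * Aᵀ = A * Bᵀ) (hrk : (Matrix.fromCols A B).rank = N)
    (a b : Fin N → ℝ) (h : A *ᵥ a + B *ᵥ b = 0) :
    ∃ v : Fin N → ℝ, a = Bᵀ *ᵥ v ∧ b = -(Aᵀ *ᵥ v) := by
  classical
  set S := (Matrix.fromCols A B).mulVecLin with hS
  let T : (Fin N → ℝ) →ₗ[ℝ] (Fin N ⊕ Fin N → ℝ) :=
    { toFun := fun v => Sum.elim (Bᵀ *ᵥ v) (-(Aᵀ *ᵥ v))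
      map_add' := by
        intro v w; ext (i|i) <;> simp [Matrix.mulVec_add] <;> ring
      map_smul' := by
        intro c v; ext (i|i) <;> simp [Matrix.mulVec_smul] }
  have hTinj : Function.Injective T := by
    intro v w hvw
    have hB : Bᵀ *ᵥ (v - w) = 0 := by
      ext i
      have := congrFun hvw (Sum.inl i)
      simp [T] at this
      simp [Matrix.mulVec_sub, this]
    have hA : Aᵀ *ᵥ (v - w) = 0 := by
      ext i
      have := congrFun hvw (Sum.inr i)
      simp [T] at this
      simp [Matrix.mulVec_sub, this]
    have := inj_of_rank hrk (v - w) hA hB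
    exact sub_eq_zero.mp this
  have hle : LinearMap.range T ≤ LinearMap.ker S := by
    rintro _ ⟨v, rfl⟩
    rw [LinearMap.mem_ker]
    show Matrix.fromCols A B *ᵥ Sum.elim (Bᵀ *ᵥ v) (-(Aᵀ *ᵥ v)) = 0
    rw [Matrix.fromCols_mulVec_sumElim]
    rw [Matrix.mulVec_neg, Matrix.mulVec_mulVec, Matrix.mulVec_mulVec, hAB]
    simp
  have hrkS : Module.finrank ℝ (LinearMap.range S) = N := hrk
  have hkerS : Module.finrank ℝ (LinearMap.ker S) = N := by
    have h1 := LinearMap.finrank_range_add_finrank_ker S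
    rw [Module.finrank_fintype_fun_eq_card, Fintype.card_sum, Fintype.card_fin, hrkS] at h1
    omega
  have hrgT : Module.finrank ℝ (LinearMap.range T) = N := by
    rw [LinearMap.finrank_range_of_inj hTinj, Module.finrank_fintype_fun_eq_card,
      Fintype.card_fin]
  have heq : LinearMap.range T = LinearMap.ker S :=
    Submodule.eq_of_le_of_finrank_le hle (by rw [hrgT, hkerS])
  have hmem : Sum.elim a b ∈ LinearMap.ker S := by
    rw [LinearMap.mem_ker]
    show Matrix.fromCols A B *ᵥ Sum.elim a b = 0
    rw [Matrix.fromCols_mulVec_sumElim]; exact h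
  rw [← heq] at hmem
  obtain ⟨v, hv⟩ := hmem
  refine ⟨v, ?_, ?_⟩
  · ext i; exact (congrFun hv (Sum.inl i)).symm
  · ext i; exact (congrFun hv (Sum.inr i)).symm

lemma norm_mulVec_le (M : Matrix (Fin N) (Fin N) ℝ) (x : Fin N → ℝ) :
    ‖M *ᵥ x‖ ≤ (N * ‖M‖) * ‖x‖ := by
  rw [show (N * ‖M‖) * ‖x‖ = N * (‖M‖ * ‖x‖) by ring]
  refine (pi_norm_le_iff_of_nonneg (by positivity)).mpr fun i => ?_
  have : (M *ᵥ x) i = ∑ j, M i j * x j := by simp [Matrix.mulVec, dotProduct]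
  rw [this]
  calc ‖∑ j, M i j * x j‖ ≤ ∑ j, ‖M i j * x j‖ := norm_sum_le _ _
    _ ≤ ∑ _j : Fin N, ‖M‖ * ‖x‖ := by
        refine Finset.sum_le_sum fun j _ => ?_
        rw [norm_mul]
        exact mul_le_mul (Matrix.norm_entry_le_entrywise_sup_norm M)
          (norm_le_pi_norm x j) (norm_nonneg _) (norm_nonneg _)
    _ = N * (‖M‖ * ‖x‖) := by simp [Finset.sum_const, nsmul_eq_mul]

lemma ode_unique (P : ℝ → Matrix (Fin N) (Fin N) ℝ)
    (hP : ContinuousOn P (Set.Icc 0 Real.pi)) (lam : ℝ)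
    (φ ψ : ℝ → Fin N → ℝ) (hφ : ContDiff ℝ 2 φ) (hψ : ContDiff ℝ 2 ψ)
    (hφeq : ∀ x ∈ Set.Icc (0:ℝ) Real.pi, -(deriv (deriv φ) x) + P x *ᵥ φ x = lam • φ x)
    (hψeq : ∀ x ∈ Set.Icc (0:ℝ) Real.pi, -(deriv (deriv ψ) x) + P x *ᵥ ψ x = lam • ψ x)
    (h0 : φ 0 = ψ 0) (h0' : deriv φ 0 = deriv ψ 0) :
    ∀ x ∈ Set.Icc (0:ℝ) Real.pi, φ x = ψ x ∧ deriv φ x = deriv ψ x := by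
  obtain ⟨C, hC⟩ := (isCompact_Icc).exists_bound_of_continuousOn hP
  set C' : ℝ := max C 0 with hC'
  have hC'0 : 0 ≤ C' := le_max_right _ _
  have hCb : ∀ t ∈ Set.Icc (0:ℝ) Real.pi, ‖P t‖ ≤ C' := fun t ht =>
    (hC t ht).trans (le_max_left _ _)
  set u : ℝ → ℝ := fun t => min (max t 0) Real.pi with hu
  have humem : ∀ t, u t ∈ Set.Icc (0:ℝ) Real.pi := fun t =>
    ⟨le_min (le_max_right _ _) Real.pi_pos.le, min_le_right _ _⟩
  have hueq : ∀ t ∈ Set.Ico (0:ℝ) Real.pi, u t = t := by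
    intro t ht
    simp only [hu]
    rw [max_eq_left ht.1, min_eq_left ht.2.le]
  set Kr : ℝ := N * C' + |lam| + 1 with hKr
  have hKr0 : 0 ≤ Kr := by positivity
  set K : NNReal := Real.toNNReal Kr with hK
  have hKco : (K : ℝ) = Kr := Real.coe_toNNReal _ hKr0
  set v : ℝ → ((Fin N → ℝ) × (Fin N → ℝ)) → ((Fin N → ℝ) × (Fin N → ℝ)) :=
    fun t z => (z.2, P (u t) *ᵥ z.1 - lam • z.1) with hv
  have hlip : ∀ t, LipschitzWith K (v t) := by
    intro t
    refine LipschitzWith.of_dist_le_mul fun z z' => ?_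
    rw [hKco]
    have hfst : dist z.1 z'.1 ≤ dist z z' := by rw [Prod.dist_eq]; exact le_max_left _ _
    have hsnd : dist z.2 z'.2 ≤ dist z z' := by rw [Prod.dist_eq]; exact le_max_right _ _
    have hNC : (0:ℝ) ≤ (N:ℝ) * C' := by positivity
    rw [Prod.dist_eq]
    refine max_le ?_ ?_
    · calc dist z.2 z'.2 ≤ dist z z' := hsnd
        _ ≤ Kr * dist z z' := by nlinarith [dist_nonneg (x := z) (y := z'), hC'0, abs_nonneg lam]
    · rw [dist_eq_norm]
      have : P (u t) *ᵥ z.1 - lam • z.1 - (P (u t) *ᵥ z'.1 - lam • z'.1)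
          = P (u t) *ᵥ (z.1 - z'.1) - lam • (z.1 - z'.1) := by
        rw [Matrix.mulVec_sub, smul_sub]; abel
      rw [this]
      have h1 : ‖P (u t) *ᵥ (z.1 - z'.1) - lam • (z.1 - z'.1)‖
          ≤ (N * C' + |lam|) * ‖z.1 - z'.1‖ := by
        calc ‖P (u t) *ᵥ (z.1 - z'.1) - lam • (z.1 - z'.1)‖
            ≤ ‖P (u t) *ᵥ (z.1 - z'.1)‖ + ‖lam • (z.1 - z'.1)‖ := norm_sub_le _ _
          _ ≤ (N * ‖P (u t)‖) * ‖z.1 - z'.1‖ + |lam| * ‖z.1 - z'.1‖ := by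
              rw [norm_smul, Real.norm_eq_abs]
              exact add_le_add_left (norm_mulVec_le _ _) _
          _ ≤ (N * C') * ‖z.1 - z'.1‖ + |lam| * ‖z.1 - z'.1‖ := by
              have := hCb (u t) (humem t)
              have hN0 : (0:ℝ) ≤ (N:ℝ) := Nat.cast_nonneg N
              have := mul_le_mul_of_nonneg_right
                (mul_le_mul_of_nonneg_left this hN0) (norm_nonneg (z.1 - z'.1))
              linarith
          _ = (N * C' + |lam|) * ‖z.1 - z'.1‖ := by ring
      have h2 : ‖z.1 - z'.1‖ ≤ dist z z' := by
        rw [← dist_eq_norm]; exact hfst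
      calc ‖P (u t) *ᵥ (z.1 - z'.1) - lam • (z.1 - z'.1)‖
          ≤ (N * C' + |lam|) * ‖z.1 - z'.1‖ := h1
        _ ≤ Kr * dist z z' := by
            nlinarith [dist_nonneg (x := z) (y := z'), abs_nonneg lam, hC'0,
              norm_nonneg (z.1 - z'.1)]
  have key : ∀ (f : ℝ → Fin N → ℝ), ContDiff ℝ 2 f →
      (∀ x ∈ Set.Icc (0:ℝ) Real.pi, -(deriv (deriv f) x) + P x *ᵥ f x = lam • f x) →
      ∀ t ∈ Set.Ico (0:ℝ) Real.pi,
        HasDerivWithinAt (fun s => (f s, deriv f s)) (v t ((f t, deriv f t))) (Set.Ici t) t := by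
    intro f hf hfeq t ht
    have hd1 : Differentiable ℝ f := hf.differentiable (by norm_num)
    have hd2 : Differentiable ℝ (deriv f) := cd2_deriv_diff hf
    have hDA : HasDerivAt (fun s => (f s, deriv f s)) (deriv f t, deriv (deriv f) t) t :=
      HasDerivAt.prodMk (hd1 t).hasDerivAt (hd2 t).hasDerivAt
    have heq2 : deriv (deriv f) t = P t *ᵥ f t - lam • f t := by
      have h := hfeq t (Set.mem_Icc_of_Ico ht)
      rw [neg_add_eq_sub] at h
      rw [← h]; abel
    have : v t ((f t, deriv f t)) = (deriv f t, deriv (deriv f) t) := by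
      simp only [hv, hueq t ht, heq2]
    rw [this]
    exact hDA.hasDerivWithinAt
  have hcontF : ContinuousOn (fun s => (φ s, deriv φ s)) (Set.Icc 0 Real.pi) :=
    (hφ.continuous.prodMk (hφ.continuous_deriv (by norm_num))).continuousOn
  have hcontG : ContinuousOn (fun s => (ψ s, deriv ψ s)) (Set.Icc 0 Real.pi) :=
    (hψ.continuous.prodMk (hψ.continuous_deriv (by norm_num))).continuousOn
  have heqOn := ODE_solution_unique hlip hcontF (key φ hφ hφeq) hcontG (key ψ hψ hψeq)
    (by rw [h0, h0'])
  intro x hx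
  have := heqOn hx
  exact ⟨congrArg Prod.fst this, congrArg Prod.snd this⟩

lemma mulVec_sum_smul {m : ℕ} (M : Matrix (Fin N) (Fin N) ℝ) (g : Fin m → ℝ)
    (v : Fin m → Fin N → ℝ) : M *ᵥ (∑ i, g i • v i) = ∑ i, g i • (M *ᵥ v i) := by
  rw [← Matrix.mulVecLin_apply, map_sum]
  refine Finset.sum_congr rfl fun i _ => ?_
  rw [_root_.map_smul, Matrix.mulVecLin_apply]

end Aux

set_option maxHeartbeats 1000000 in
/-- The map `v ↦ (x ↦ Y(x;lam) *ᵥ v)` restricts to a linear isomorphism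
from `Null(W(lam))` onto the space of solutions of the boundary value problem; in
particular the multiplicity of `lam` equals `dim Null(W(lam))`. -/
theorem nullspace_equiv_eigenspace
    (N : ℕ) (hN : 1 ≤ N)
    (P : ℝ → Matrix (Fin N) (Fin N) ℝ) (A B 𝒜 ℬ : Matrix (Fin N) (Fin N) ℝ)
    (hP : ContinuousOn P (Set.Icc 0 Real.pi))
    (hPsymm : ∀ x ∈ Set.Icc (0:ℝ) Real.pi, (P x)ᵀ = P x)
    (hAB : B * Aᵀ = A * Bᵀ) (hAB' : ℬ * 𝒜ᵀ = 𝒜 * ℬᵀ)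
    (hrkAB : (Matrix.fromCols A B).rank = N)
    (hrkAB' : (Matrix.fromCols 𝒜 ℬ).rank = N)
    -- `Y (·; l)` is the solution of the matrix initial value problem
    (Y : ℝ → ℝ → Matrix (Fin N) (Fin N) ℝ)
    (hYC : ∀ l : ℝ, ContDiff ℝ 2 (fun x => Y x l))
    (hYeq : ∀ l : ℝ, ∀ x ∈ Set.Icc (0:ℝ) Real.pi,
      -(deriv (deriv (fun s => Y s l)) x) + P x * Y x l = l • Y x l)
    (hY0 : ∀ l : ℝ, Y 0 l = Bᵀ)
    (hY0' : ∀ l : ℝ, deriv (fun s => Y s l) 0 = -Aᵀ)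
    -- the characteristic matrix `W(lam)`
    (lam : ℝ) (W : Matrix (Fin N) (Fin N) ℝ)
    (hW : W = ℬ * deriv (fun s => Y s lam) Real.pi + 𝒜 * Y Real.pi lam) :
    (∀ v ∈ LinearMap.ker W.mulVecLin, SLSol N P A B 𝒜 ℬ lam (fun x => Y x lam *ᵥ v)) ∧
    (∀ v ∈ LinearMap.ker W.mulVecLin, ∀ w ∈ LinearMap.ker W.mulVecLin,
      (∀ x ∈ Set.Icc (0:ℝ) Real.pi, Y x lam *ᵥ v = Y x lam *ᵥ w) → v = w) ∧
    (∀ φ, SLSol N P A B 𝒜 ℬ lam φ → ∃ v ∈ LinearMap.ker W.mulVecLin,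
      ∀ x ∈ Set.Icc (0:ℝ) Real.pi, φ x = Y x lam *ᵥ v) ∧
    (∀ m : ℕ, HasMultiplicity N P A B 𝒜 ℬ lam m ↔
      m = Module.finrank ℝ (LinearMap.ker W.mulVecLin)) := by
  classical
  set Yf : ℝ → Matrix (Fin N) (Fin N) ℝ := fun s => Y s lam with hYf
  have hYfC : ContDiff ℝ 2 Yf := hYC lam
  have hYfd : Differentiable ℝ Yf := hYfC.differentiable (by norm_num)
  have hYfd' : Differentiable ℝ (deriv Yf) := cd2_deriv_diff hYfC
  -- derivative facts for `x ↦ Y x lam *ᵥ v`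
  have hd1 : ∀ v : Fin N → ℝ, deriv (fun x => Y x lam *ᵥ v) = fun x => deriv Yf x *ᵥ v :=
    fun v => deriv_mulVec hYfd v
  have hd2 : ∀ v : Fin N → ℝ,
      deriv (deriv (fun x => Y x lam *ᵥ v)) = fun x => deriv (deriv Yf) x *ᵥ v := by
    intro v
    rw [hd1 v]
    exact deriv_mulVec hYfd' v
  -- ODE satisfied by `x ↦ Y x lam *ᵥ v`
  have hode : ∀ v : Fin N → ℝ, ∀ x ∈ Set.Icc (0:ℝ) Real.pi,
      -(deriv (deriv (fun x => Y x lam *ᵥ v)) x) + P x *ᵥ (Y x lam *ᵥ v)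
        = lam • (Y x lam *ᵥ v) := by
    intro v x hx
    rw [hd2 v]
    have h := hYeq lam x hx
    have := congrArg (fun M => M *ᵥ v) h
    simp only [Matrix.add_mulVec, Matrix.neg_mulVec, ← Matrix.mulVec_mulVec,
      Matrix.smul_mulVec] at this
    exact this
  -- Part 1
  have part1 : ∀ v ∈ LinearMap.ker W.mulVecLin,
      SLSol N P A B 𝒜 ℬ lam (fun x => Y x lam *ᵥ v) := by
    intro v hv
    have hker : W *ᵥ v = 0 := hv
    refine ⟨contDiff_mulVec hYfC v, hode v, ?_, ?_⟩
    · have h0 : (fun x => Y x lam *ᵥ v) 0 = Bᵀ *ᵥ v := by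
        show Y 0 lam *ᵥ v = Bᵀ *ᵥ v
        rw [show Y 0 lam = Yf 0 from rfl, show Yf 0 = Bᵀ from hY0 lam]
      have h0' : deriv (fun x => Y x lam *ᵥ v) 0 = -(Aᵀ *ᵥ v) := by
        rw [hd1 v]
        show deriv Yf 0 *ᵥ v = -(Aᵀ *ᵥ v)
        rw [hY0' lam, Matrix.neg_mulVec]
      rw [h0, h0', Matrix.mulVec_neg, Matrix.mulVec_mulVec, Matrix.mulVec_mulVec, hAB]
      simp
    · have hπ : (fun x => Y x lam *ᵥ v) Real.pi = Y Real.pi lam *ᵥ v := rfl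
      have hπ' : deriv (fun x => Y x lam *ᵥ v) Real.pi = deriv Yf Real.pi *ᵥ v := by
        rw [hd1 v]
      rw [hπ, hπ', Matrix.mulVec_mulVec, Matrix.mulVec_mulVec, ← Matrix.add_mulVec, ← hW]
      exact hker
  -- Part 2
  have part2 : ∀ v ∈ LinearMap.ker W.mulVecLin, ∀ w ∈ LinearMap.ker W.mulVecLin,
      (∀ x ∈ Set.Icc (0:ℝ) Real.pi, Y x lam *ᵥ v = Y x lam *ᵥ w) → v = w := by
    intro v _ w _ h
    have hEq : Set.EqOn (fun x => Y x lam *ᵥ v) (fun x => Y x lam *ᵥ w)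
        (Set.Icc 0 Real.pi) := fun x hx => h x hx
    have hd := deriv_eqOn_Icc (contDiff_mulVec hYfC v) (contDiff_mulVec hYfC w) hEq
    have h0 : (0:ℝ) ∈ Set.Icc (0:ℝ) Real.pi := ⟨le_refl _, Real.pi_pos.le⟩
    have hB : Bᵀ *ᵥ (v - w) = 0 := by
      have := h 0 h0
      rw [show Y 0 lam = Bᵀ from hY0 lam] at this
      rw [Matrix.mulVec_sub, this, sub_self]
    have hA : Aᵀ *ᵥ (v - w) = 0 := by
      have := hd h0
      rw [hd1 v, hd1 w] at this
      simp only at this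
      rw [show deriv Yf 0 = -Aᵀ from hY0' lam, Matrix.neg_mulVec, Matrix.neg_mulVec] at this
      have h2 : Aᵀ *ᵥ v = Aᵀ *ᵥ w := by
        have := congrArg Neg.neg this; simpa using this
      rw [Matrix.mulVec_sub, h2, sub_self]
    have := inj_of_rank hrkAB (v - w) hA hB
    exact sub_eq_zero.mp this
  -- Part 3
  have part3 : ∀ φ, SLSol N P A B 𝒜 ℬ lam φ → ∃ v ∈ LinearMap.ker W.mulVecLin,
      ∀ x ∈ Set.Icc (0:ℝ) Real.pi, φ x = Y x lam *ᵥ v := by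
    intro φ hφ
    obtain ⟨hφC, hφode, hφbc0, hφbcπ⟩ := hφ
    have hsum : A *ᵥ φ 0 + B *ᵥ deriv φ 0 = 0 := by rw [add_comm]; exact hφbc0
    obtain ⟨v, hva, hvb⟩ := exists_param hAB hrkAB (φ 0) (deriv φ 0) hsum
    set ψ : ℝ → Fin N → ℝ := fun x => Y x lam *ᵥ v with hψ
    have hψC : ContDiff ℝ 2 ψ := contDiff_mulVec hYfC v
    have hψ0 : φ 0 = ψ 0 := by
      rw [hψ]
      show φ 0 = Y 0 lam *ᵥ v
      rw [show Y 0 lam = Bᵀ from hY0 lam]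
      exact hva
    have hψ0' : deriv φ 0 = deriv ψ 0 := by
      rw [hψ, hd1 v]
      show deriv φ 0 = deriv Yf 0 *ᵥ v
      rw [show deriv Yf 0 = -Aᵀ from hY0' lam, Matrix.neg_mulVec]
      exact hvb
    have huniq := ode_unique P hP lam φ ψ hφC hψC hφode (hode v) hψ0 hψ0'
    have hπmem : Real.pi ∈ Set.Icc (0:ℝ) Real.pi := ⟨Real.pi_pos.le, le_refl _⟩
    have hπ := huniq Real.pi hπmem
    refine ⟨v, ?_, fun x hx => (huniq x hx).1⟩
    show W *ᵥ v = 0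
    rw [hW, Matrix.add_mulVec, ← Matrix.mulVec_mulVec, ← Matrix.mulVec_mulVec]
    have e1 : Y Real.pi lam *ᵥ v = φ Real.pi := (hπ.1).symm
    have e2 : deriv Yf Real.pi *ᵥ v = deriv φ Real.pi := by
      rw [hπ.2, hψ, hd1 v]
    rw [e1, e2]
    exact hφbcπ
  refine ⟨part1, part2, part3, ?_⟩
  -- Part 4
  intro m
  constructor
  · rintro ⟨b, hsol, hli, hspan⟩
    choose v hvker hvb using fun i => part3 (b i) (hsol i)
    set u : Fin m → LinearMap.ker W.mulVecLin := fun i => ⟨v i, hvker i⟩ with hu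
    have hulin : LinearIndependent ℝ u := by
      rw [Fintype.linearIndependent_iff]
      intro g hg
      have hg' : (∑ i, g i • v i) = 0 := by
        have := congrArg (Subtype.val) hg
        simpa [hu] using this
      have : ∀ x ∈ Set.Icc (0:ℝ) Real.pi, ∑ i, g i • b i x = 0 := by
        intro x hx
        have : ∑ i, g i • b i x = ∑ i, g i • (Y x lam *ᵥ v i) := by
          refine Finset.sum_congr rfl fun i _ => ?_
          rw [hvb i x hx]
        rw [this, ← mulVec_sum_smul, hg', Matrix.mulVec_zero]
      have := hli _ this
      exact fun i => congrFun this i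
    have huspan : ⊤ ≤ Submodule.span ℝ (Set.range u) := by
      rintro ⟨w, hw⟩ -
      obtain ⟨d, hd⟩ := hspan _ (part1 w hw)
      have hsum_mem : (∑ i, d i • v i) ∈ LinearMap.ker W.mulVecLin :=
        Submodule.sum_mem _ fun i _ => Submodule.smul_mem _ _ (hvker i)
      have hwe : w = ∑ i, d i • v i := by
        refine part2 w hw _ hsum_mem fun x hx => ?_
        rw [mulVec_sum_smul]
        have : ∑ i, d i • (Y x lam *ᵥ v i) = ∑ i, d i • b i x := by
          refine Finset.sum_congr rfl fun i _ => ?_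
          rw [hvb i x hx]
        rw [this]
        exact hd x hx
      have : (⟨w, hw⟩ : LinearMap.ker W.mulVecLin) = ∑ i, d i • u i := by
        apply Subtype.ext
        simpa [hu] using hwe
      rw [this]
      exact Submodule.sum_mem _ fun i _ =>
        Submodule.smul_mem _ _ (Submodule.subset_span ⟨i, rfl⟩)
    have hbasis : Module.Basis (Fin m) ℝ (LinearMap.ker W.mulVecLin) := Module.Basis.mk hulin huspan
    rw [Module.finrank_eq_card_basis hbasis, Fintype.card_fin]
  · intro hm
    have hbasis : Module.Basis (Fin m) ℝ (LinearMap.ker W.mulVecLin) :=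
      Module.finBasisOfFinrankEq ℝ _ hm.symm
    refine ⟨fun i x => Y x lam *ᵥ (hbasis i : Fin N → ℝ), ?_, ?_, ?_⟩
    · exact fun i => part1 _ (hbasis i).2
    · intro d hd
      have hsum_mem : (∑ i, d i • ((hbasis i : Fin N → ℝ))) ∈ LinearMap.ker W.mulVecLin :=
        Submodule.sum_mem _ fun i _ => Submodule.smul_mem _ _ (hbasis i).2
      have hzero : (∑ i, d i • ((hbasis i : Fin N → ℝ))) = 0 := by
        refine part2 _ hsum_mem 0 (Submodule.zero_mem _) fun x hx => ?_
        rw [mulVec_sum_smul, Matrix.mulVec_zero]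
        exact hd x hx
      have : (∑ i, d i • hbasis i) = (0 : LinearMap.ker W.mulVecLin) := by
        apply Submodule.injective_subtype (LinearMap.ker W.mulVecLin)
        rw [map_sum, map_zero]
        simp only [_root_.map_smul, Submodule.subtype_apply]
        exact hzero
      have hli := Fintype.linearIndependent_iff.mp hbasis.linearIndependent d this
      funext i
      exact hli i
    · intro φ hφ
      obtain ⟨v, hvker, hvb⟩ := part3 φ hφ
      set vK : LinearMap.ker W.mulVecLin := ⟨v, hvker⟩ with hvK
      refine ⟨fun i => hbasis.repr vK i, fun x hx => ?_⟩
      have hrepr : (∑ i, hbasis.repr vK i • hbasis i) = vK := hbasis.sum_repr vK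
      have hrepr' : (∑ i, hbasis.repr vK i • (hbasis i : Fin N → ℝ)) = v := by
        have := congrArg ((LinearMap.ker W.mulVecLin).subtype) hrepr
        rw [map_sum] at this
        simp only [_root_.map_smul, Submodule.subtype_apply] at this
        exact this
      rw [hvb x hx, ← hrepr', mulVec_sum_smul]
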